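/- Let δ > 0, let X_1,…,X_k be i.i.d. N(δ,1) random variables and X_{k+1},…,X_m be i.i.d. N(0,1) random variables, with all m variables independent. Let f(δ) = P[X_i > X_j for all i ∈ {1,…,k} and all j ∈ {k+1,…,m}]. Then f(δ) ≤ exp(δ·k·√(2·log m)) / binom(m,k). -/

import Mathlib

open MeasureTheory ProbabilityTheory
open scoped ENNReal NNReal

section AuxProof
open MeasureTheory ProbabilityTheory Real
open scoped ENNReal NNReal

noncomputable section

/-! ### Auxiliary lemmas -/

lemma lintegral_pi_prod : ∀ (n : ℕ) (μ : Fin n → Measure ℝ) (_ : ∀ i, SigmaFinite (μ i))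
    (f : Fin n → ℝ → ℝ≥0∞) (_ : ∀ i, Measurable (f i)),
    ∫⁻ x : Fin n → ℝ, ∏ i, f i (x i) ∂Measure.pi μ = ∏ i, ∫⁻ y, f i y ∂μ i := by
  intro n
  induction n with
  | zero =>
    intro μ _ f _
    simp [Measure.pi_of_empty]
  | succ n ih =>
    intro μ hμ f hf
    have hmp := measurePreserving_piFinSuccAbove (μ := μ) 0
    set e := MeasurableEquiv.piFinSuccAbove (fun _ : Fin (n+1) => ℝ) 0 with he
    have key : ∫⁻ x : Fin (n+1) → ℝ, ∏ i, f i (x i) ∂Measure.pi μ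
        = ∫⁻ p : ℝ × (Fin n → ℝ), f 0 p.1 * ∏ i, f i.succ (p.2 i)
            ∂((μ 0).prod (Measure.pi fun i => μ ((0 : Fin (n+1)).succAbove i))) := by
      rw [← hmp.lintegral_comp]
      · refine lintegral_congr fun x => ?_
        have : (e x).1 = x 0 := rfl
        rw [this, Fin.prod_univ_succ]
        congr 1
      · exact (hf 0).comp measurable_fst |>.mul <| Finset.measurable_prod _
          fun i _ => (hf i.succ).comp (measurable_snd.eval)
    have h2 := lintegral_prod_mul (μ := μ 0) (ν := Measure.pi fun i => μ (Fin.succAbove 0 i))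
      (f := f 0) (g := fun y : Fin n → ℝ => ∏ i, f i.succ (y i)) ((hf 0).aemeasurable)
      ((Finset.measurable_prod _ fun i _ => (hf i.succ).comp (measurable_pi_apply i)).aemeasurable)
    rw [key, h2, Fin.prod_univ_succ]
    congr 1
    exact ih _ (fun i => hμ _) _ (fun i => hf _)

lemma tilt_mul_pdf (c y : ℝ) :
    ENNReal.ofReal (rexp (c * y - c^2/2)) * gaussianPDF 0 1 y = gaussianPDF c 1 y := by
  rw [gaussianPDF, gaussianPDF, ← ENNReal.ofReal_mul (by positivity)]
  congr 1
  simp only [gaussianPDFReal, NNReal.coe_one]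
  rw [mul_left_comm, ← Real.exp_add]
  congr 2
  ring

lemma gaussianReal_tilt (c : ℝ) :
    (gaussianReal 0 1).withDensity (fun y => ENNReal.ofReal (rexp (c * y - c^2/2)))
      = gaussianReal c 1 := by
  rw [gaussianReal_of_var_ne_zero 0 one_ne_zero, gaussianReal_of_var_ne_zero c one_ne_zero,
    ← withDensity_mul _ (measurable_gaussianPDF 0 1)
      (by fun_prop : Measurable fun y => ENNReal.ofReal (rexp (c * y - c^2/2)))]
  congr 1
  ext y
  simp only [Pi.mul_apply]
  rw [mul_comm]
  exact tilt_mul_pdf c y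

lemma lintegral_tilt (c : ℝ) :
    ∫⁻ y, ENNReal.ofReal (rexp (c * y - c^2/2)) ∂gaussianReal 0 1 = 1 := by
  have := congrArg (fun ν : Measure ℝ => ν Set.univ) (gaussianReal_tilt c)
  simpa [withDensity_apply _ MeasurableSet.univ] using this

lemma lintegral_exp_gaussian (c : ℝ) :
    ∫⁻ y, ENNReal.ofReal (rexp (c * y)) ∂gaussianReal 0 1 = ENNReal.ofReal (rexp (c^2/2)) := by
  have h : ∀ y : ℝ, ENNReal.ofReal (rexp (c * y))
      = ENNReal.ofReal (rexp (c^2/2)) * ENNReal.ofReal (rexp (c * y - c^2/2)) := by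
    intro y
    rw [← ENNReal.ofReal_mul (by positivity), ← Real.exp_add]
    ring_nf
  simp_rw [h]
  rw [lintegral_const_mul _ (by fun_prop), lintegral_tilt, mul_one]

lemma lintegral_exp_gaussian_affine (c b : ℝ) :
    ∫⁻ y, ENNReal.ofReal (rexp (c * y + b)) ∂gaussianReal 0 1
      = ENNReal.ofReal (rexp (c^2/2 + b)) := by
  have h : ∀ y : ℝ, ENNReal.ofReal (rexp (c * y + b))
      = ENNReal.ofReal (rexp b) * ENNReal.ofReal (rexp (c * y)) := by
    intro y
    rw [← ENNReal.ofReal_mul (by positivity), ← Real.exp_add]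
    ring_nf
  simp_rw [h]
  rw [lintegral_const_mul _ (by fun_prop), lintegral_exp_gaussian,
    ← ENNReal.ofReal_mul (by positivity), ← Real.exp_add]
  ring_nf

/-! ### Symmetry lemmas -/

variable {m : ℕ}

def topSet (m : ℕ) (T : Finset (Fin m)) : Set (Fin m → ℝ) :=
  {x | ∀ i ∈ T, ∀ j ∉ T, x j < x i}

lemma measurableSet_topSet (T : Finset (Fin m)) : MeasurableSet (topSet m T) := by
  have : topSet m T = ⋂ (i : Fin m) (_ : i ∈ T) (j : Fin m) (_ : j ∉ T), {x | x j < x i} := by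
    ext x; simp [topSet]
  rw [this]
  exact MeasurableSet.iInter fun i => MeasurableSet.iInter fun _ =>
    MeasurableSet.iInter fun j => MeasurableSet.iInter fun _ =>
      measurableSet_lt (measurable_pi_apply j) (measurable_pi_apply i)

lemma topSet_disjoint {S T : Finset (Fin m)} (hST : S ≠ T) (hc : S.card = T.card) :
    Disjoint (topSet m S) (topSet m T) := by
  have h1 : (S \ T).Nonempty := by
    rw [Finset.sdiff_nonempty]
    intro hsub
    exact hST (Finset.eq_of_subset_of_card_le hsub hc.ge)
  have h2 : (T \ S).Nonempty := by
    rw [Finset.sdiff_nonempty]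
    intro hsub
    exact hST (Finset.eq_of_subset_of_card_le hsub hc.le).symm
  obtain ⟨i, hi⟩ := h1
  obtain ⟨j, hj⟩ := h2
  rw [Finset.mem_sdiff] at hi hj
  rw [Set.disjoint_left]
  intro x hxS hxT
  have h3 := hxS i hi.1 j hj.2
  have h4 := hxT j hj.1 i hi.2
  exact absurd (h3.trans h4) (lt_irrefl _)

lemma topSet_measure_eq {S T : Finset (Fin m)} (hc : S.card = T.card) :
    Measure.pi (fun _ : Fin m => gaussianReal 0 1) (topSet m S)
      = Measure.pi (fun _ : Fin m => gaussianReal 0 1) (topSet m T) := by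
  classical
  have hcc : Sᶜ.card = Tᶜ.card := by
    simp [Finset.card_compl, hc]
  let e₁ : {x // x ∈ S} ≃ {x // x ∈ T} := Finset.equivOfCardEq hc
  let e₂' : {x // x ∈ Sᶜ} ≃ {x // x ∈ Tᶜ} := Finset.equivOfCardEq hcc
  let e₂ : {x // ¬ x ∈ S} ≃ {x // ¬ x ∈ T} :=
    ((Equiv.subtypeEquivRight (fun x => (Finset.mem_compl (s := S)).symm)).trans e₂').trans
      (Equiv.subtypeEquivRight (fun x => Finset.mem_compl (s := T)))
  let σ : Fin m ≃ Fin m :=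
    ((Equiv.sumCompl (· ∈ S)).symm.trans (e₁.sumCongr e₂)).trans (Equiv.sumCompl (· ∈ T))
  have hσS : ∀ x : Fin m, x ∈ S → σ x ∈ T := by
    intro x hx
    simp only [σ, Equiv.trans_apply, Equiv.sumCompl_symm_apply_of_pos hx,
      Equiv.sumCongr_apply, Sum.map_inl, Equiv.sumCompl_apply_inl]
    exact (e₁ ⟨x, hx⟩).2
  have hσSc : ∀ x : Fin m, x ∉ S → σ x ∉ T := by
    intro x hx
    simp only [σ, Equiv.trans_apply, Equiv.sumCompl_symm_apply_of_neg hx,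
      Equiv.sumCongr_apply, Sum.map_inr, Equiv.sumCompl_apply_inr]
    exact (e₂ ⟨x, hx⟩).2
  have hσT : ∀ y : Fin m, y ∈ T → σ.symm y ∈ S := by
    intro y hy
    by_contra h
    exact hσSc _ h (by simpa using hy)
  have hσTc : ∀ y : Fin m, y ∉ T → σ.symm y ∉ S := by
    intro y hy h
    exact hy (by simpa using hσS _ h)
  have hmp := measurePreserving_piCongrLeft (fun _ : Fin m => gaussianReal 0 1) σ
  have hpre : topSet m S
      = (MeasurableEquiv.piCongrLeft (fun _ : Fin m => ℝ) σ) ⁻¹' (topSet m T) := by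
    ext x
    simp only [Set.mem_preimage, topSet, Set.mem_setOf_eq]
    have happ : ∀ a : Fin m,
        (MeasurableEquiv.piCongrLeft (fun _ : Fin m => ℝ) σ) x a = x (σ.symm a) := by
      intro a
      conv_lhs => rw [show a = σ (σ.symm a) by simp]
      rw [MeasurableEquiv.coe_piCongrLeft]
      exact Equiv.piCongrLeft_apply_apply (P := fun _ : Fin m => ℝ) (e := σ) x (σ.symm a)
    constructor
    · intro hx i hi j hj
      rw [happ i, happ j]
      exact hx _ (hσT i hi) _ (hσTc j hj)
    · intro hx i hi j hj
      have := hx (σ i) (hσS i hi) (σ j) (hσSc j hj)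
      rwa [happ, happ, Equiv.symm_apply_apply, Equiv.symm_apply_apply] at this
  rw [hpre, ← hmp.measure_preimage (measurableSet_topSet T).nullMeasurableSet]

lemma card_filter_lt {k : ℕ} (hk : k ≤ m) :
    (Finset.univ.filter fun i : Fin m => (i : ℕ) < k).card = k := by
  have hKeq : (Finset.univ.filter fun i : Fin m => (i : ℕ) < k)
      = Finset.map (Fin.castLEEmb hk) Finset.univ := by
    ext i
    simp only [Finset.mem_filter, Finset.mem_univ, true_and, Finset.mem_map,
      Fin.castLEEmb, Function.Embedding.coeFn_mk]
    constructor
    · intro h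
      exact ⟨⟨(i : ℕ), h⟩, by ext; simp⟩
    · rintro ⟨j, rfl⟩
      simp [j.2]
  rw [hKeq, Finset.card_map, Finset.card_univ, Fintype.card_fin]

lemma topSet_measure_le (k : ℕ) (hk : k ≤ m) :
    (m.choose k : ℝ≥0∞) * Measure.pi (fun _ : Fin m => gaussianReal 0 1)
        (topSet m (Finset.univ.filter fun i : Fin m => (i : ℕ) < k)) ≤ 1 := by
  classical
  set P0 := Measure.pi (fun _ : Fin m => gaussianReal 0 1)
  set K := Finset.univ.filter fun i : Fin m => (i : ℕ) < k with hK
  have hKcard : K.card = k := card_filter_lt hk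
  have hmain :
      (m.choose k : ℝ≥0∞) * P0 (topSet m K)
        = ∑ T ∈ Finset.powersetCard k (Finset.univ : Finset (Fin m)), P0 (topSet m T) := by
    rw [Finset.sum_congr rfl (fun T hT =>
      (topSet_measure_eq ((Finset.mem_powersetCard_univ.mp hT).trans hKcard.symm) : _))]
    rw [Finset.sum_const, Finset.card_powersetCard, Finset.card_univ, Fintype.card_fin,
      nsmul_eq_mul]
  rw [hmain, ← measure_biUnion_finset ?_ (fun T _ => measurableSet_topSet T)]
  · exact prob_le_one
  · intro S hS T hT hST
    exact topSet_disjoint hST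
      ((Finset.mem_powersetCard_univ.mp hS).trans (Finset.mem_powersetCard_univ.mp hT).symm)

/-! ### Change of measure -/

lemma pi_eq_withDensity (m k : ℕ) (δ : ℝ) :
    Measure.pi (fun i : Fin m => gaussianReal (if (i : ℕ) < k then δ else 0) 1)
      = (Measure.pi fun _ : Fin m => gaussianReal 0 1).withDensity
          (fun x => ∏ i : Fin m, ENNReal.ofReal
            (rexp (if (i : ℕ) < k then δ * x i - δ^2/2 else 0))) := by
  classical
  have hmeas : ∀ i : Fin m, Measurable fun y : ℝ =>
      ENNReal.ofReal (rexp (if (i : ℕ) < k then δ * y - δ^2/2 else 0)) := by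
    intro i
    by_cases h : (i : ℕ) < k
    · simp only [if_pos h]; fun_prop
    · simp only [if_neg h]; fun_prop
  refine Measure.pi_eq fun s hs => ?_
  rw [withDensity_apply _ (MeasurableSet.univ_pi hs),
    ← lintegral_indicator (MeasurableSet.univ_pi hs)]
  have hind : ∀ x : Fin m → ℝ,
      Set.indicator (Set.pi Set.univ s)
        (fun x => ∏ i : Fin m, ENNReal.ofReal (rexp (if (i : ℕ) < k then δ * x i - δ^2/2 else 0))) x
      = ∏ i, Set.indicator (s i)
          (fun y => ENNReal.ofReal (rexp (if (i : ℕ) < k then δ * y - δ^2/2 else 0))) (x i) := by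
    intro x
    by_cases hx : x ∈ Set.pi Set.univ s
    · rw [Set.indicator_of_mem hx]
      exact Finset.prod_congr rfl fun i _ =>
        (Set.indicator_of_mem (hx i (Set.mem_univ i))
          (fun y => ENNReal.ofReal (rexp (if (i : ℕ) < k then δ * y - δ^2/2 else 0)))).symm
    · rw [Set.indicator_of_notMem hx]
      obtain ⟨i, hi⟩ : ∃ i, x i ∉ s i := by
        by_contra h
        push_neg at h
        exact hx fun i _ => h i
      exact (Finset.prod_eq_zero (Finset.mem_univ i) (Set.indicator_of_notMem hi _)).symm
  simp_rw [hind]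
  rw [lintegral_pi_prod m _ (fun _ => inferInstance) _
    (fun i => (hmeas i).indicator (hs i))]
  refine Finset.prod_congr rfl fun i _ => ?_
  rw [lintegral_indicator (hs i), ← withDensity_apply _ (hs i)]
  by_cases h : (i : ℕ) < k
  · simp only [if_pos h]
    rw [gaussianReal_tilt δ]
  · simp only [if_neg h, Real.exp_zero, ENNReal.ofReal_one]
    rw [show (fun _ : ℝ => (1:ℝ≥0∞)) = 1 from rfl, withDensity_one]

/-! ### Final real arithmetic -/

lemma final_real (B s δ : ℝ) (k : ℕ) (hB : 1 ≤ B) (hδ : 0 < δ) (hδs : δ < s)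
    (hlog : Real.log B ≤ (k : ℝ) * (s^2/2)) :
    B⁻¹ ^ ((s - δ)/s) * rexp ((k : ℝ)*δ*(s - δ)/2) ≤ rexp (δ*(k : ℝ)*s)/B := by
  have hs : 0 < s := hδ.trans hδs
  have hB0 : 0 < B := lt_of_lt_of_le one_pos hB
  have hlB : 0 ≤ Real.log B := Real.log_nonneg hB
  have l1 : B⁻¹ ^ ((s - δ)/s) = rexp (-Real.log B * ((s - δ)/s)) := by
    rw [Real.rpow_def_of_pos (inv_pos.mpr hB0), Real.log_inv]
  have l2 : rexp (δ*(k : ℝ)*s)/B = rexp (δ*(k : ℝ)*s - Real.log B) := by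
    rw [Real.exp_sub, Real.exp_log hB0]
  rw [l1, ← Real.exp_add, l2, Real.exp_le_exp]
  have key : (δ*(k : ℝ)*s - Real.log B)
      - (-Real.log B * ((s - δ)/s) + (k : ℝ)*δ*(s - δ)/2)
      = (δ/s)*((k : ℝ)*(s^2/2) - Real.log B) + (k : ℝ)*δ^2/2 := by
    field_simp
    ring
  have h1 : 0 ≤ (δ/s)*((k : ℝ)*(s^2/2) - Real.log B) + (k : ℝ)*δ^2/2 := by
    have := mul_nonneg (div_nonneg hδ.le hs.le) (sub_nonneg.mpr hlog)
    positivity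
  linarith

end


end AuxProof

noncomputable section
open Real

/-- Let `X_1,…,X_k ∼ N(δ,1)` and `X_{k+1},…,X_m ∼ N(0,1)` be independent, and let
`f(δ) = P[X_i > X_j for all i ∈ [k], j ∈ [m]∖[k]]`.  Then
`f(δ) ≤ exp(δ k √(2 log m)) / binom(m,k)`. -/
theorem gaussian_shifted_topk_probability (m k : ℕ) (hk : k ≤ m) (δ : ℝ) (hδ : 0 < δ) :
    (Measure.pi fun i : Fin m => gaussianReal (if (i : ℕ) < k then δ else 0) 1)
        {x | ∀ i : Fin m, (i : ℕ) < k → ∀ j : Fin m, k ≤ (j : ℕ) → x j < x i} ≤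
      ENNReal.ofReal
        (Real.exp (δ * k * Real.sqrt (2 * Real.log m)) / m.choose k) := by
  classical
  set s := Real.sqrt (2 * Real.log m) with hs_def
  set B : ℝ := (m.choose k : ℝ) with hB_def
  have hB1 : (1:ℝ) ≤ B := by
    rw [hB_def]
    exact_mod_cast Nat.one_le_iff_ne_zero.mpr (Nat.choose_pos hk).ne'
  have hB0 : (0:ℝ) < B := lt_of_lt_of_le one_pos hB1
  have hs0 : 0 ≤ s := Real.sqrt_nonneg _
  set A : Set (Fin m → ℝ) :=
    {x | ∀ i : Fin m, (i : ℕ) < k → ∀ j : Fin m, k ≤ (j : ℕ) → x j < x i} with hA_def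
  set K := Finset.univ.filter fun i : Fin m => (i : ℕ) < k with hK_def
  have hAtop : A = topSet m K := by
    ext x
    simp only [hA_def, topSet, Set.mem_setOf_eq, hK_def, Finset.mem_filter, Finset.mem_univ,
      true_and, not_lt]
  have hA : MeasurableSet A := hAtop ▸ measurableSet_topSet K
  by_cases hcase : s ≤ δ
  · -- trivial branch
    refine le_trans prob_le_one ?_
    rw [ENNReal.one_le_ofReal]
    rw [le_div_iff₀ hB0, one_mul]
    rcases Nat.eq_zero_or_pos m with hm | hm
    · subst hm
      interval_cases k
      simp [hB_def]
    · have hm1 : (1:ℝ) ≤ m := by exact_mod_cast hm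
      have hlogm : 0 ≤ Real.log m := Real.log_nonneg hm1
      have hs2 : s^2 = 2 * Real.log m := Real.sq_sqrt (by linarith)
      have h1 : B ≤ (m:ℝ)^k := by
        rw [hB_def]
        exact_mod_cast Nat.choose_le_pow m k
      have h2 : (m:ℝ)^k = Real.exp ((k:ℝ) * Real.log m) := by
        rw [Real.exp_nat_mul, Real.exp_log (by linarith)]
      refine h1.trans ?_
      rw [h2, Real.exp_le_exp]
      have : Real.log m = s^2/2 := by rw [hs2]; ring
      rw [this]
      nlinarith [mul_nonneg (Nat.cast_nonneg k : (0:ℝ) ≤ k) hs0]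
  · -- main branch
    push_neg at hcase
    have hs_pos : 0 < s := hδ.trans hcase
    have hlogm_pos : 0 < Real.log m := by
      by_contra h
      push_neg at h
      have : s = 0 := by
        rw [hs_def, Real.sqrt_eq_zero']
        linarith
      linarith
    have hm1 : (1:ℝ) < m := by
      rcases le_or_gt (m:ℝ) 1 with h | h
      · by_cases hm0 : (m:ℝ) ≤ 0
        · have : (m:ℕ) = 0 := by exact_mod_cast le_antisymm (by exact_mod_cast hm0) (Nat.zero_le m)
          rw [this] at hlogm_pos
          simp at hlogm_pos
        · push_neg at hm0
          have := Real.log_nonpos (by linarith) h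
          linarith
      · exact h
    have hs2 : s^2 = 2 * Real.log m := Real.sq_sqrt (by linarith)
    set q : ℝ := s / δ with hq_def
    have hq : 1 < q := (one_lt_div hδ).mpr hcase
    have hpq : (Real.conjExponent q).HolderConjugate q :=
      (Real.HolderConjugate.conjExponent hq).symm
    set p : ℝ := Real.conjExponent q with hp_def
    set P0 := Measure.pi fun _ : Fin m => gaussianReal 0 1 with hP0
    set F : (Fin m → ℝ) → ℝ≥0∞ := fun x =>
      ∏ i : Fin m, ENNReal.ofReal (rexp (if (i : ℕ) < k then δ * x i - δ^2/2 else 0)) with hF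
    have hFmeas : Measurable F := by
      refine Finset.measurable_prod _ fun i _ => ?_
      by_cases h : (i : ℕ) < k
      · simp only [if_pos h]; fun_prop
      · simp only [if_neg h]; fun_prop
    have hIndmeas : Measurable (A.indicator (fun _ => (1:ℝ≥0∞))) :=
      measurable_one.indicator hA
    have step1 : (Measure.pi fun i : Fin m => gaussianReal (if (i : ℕ) < k then δ else 0) 1) A
        = ∫⁻ x, (A.indicator (fun _ => (1:ℝ≥0∞)) * F) x ∂P0 := by
      rw [pi_eq_withDensity m k δ, withDensity_apply _ hA, ← lintegral_indicator hA]
      congr 1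
      funext x
      by_cases hx : x ∈ A
      · simp [hx, Set.indicator_of_mem, hF]
      · simp [hx, Set.indicator_of_notMem]
    have step2 := ENNReal.lintegral_mul_le_Lp_mul_Lq P0 hpq hIndmeas.aemeasurable
      hFmeas.aemeasurable
    -- factor 1
    have f1 : (∫⁻ x, (A.indicator (fun _ => (1:ℝ≥0∞)) x) ^ p ∂P0) ^ (1/p)
        = (P0 A) ^ (1/p) := by
      congr 1
      rw [← lintegral_indicator_one hA]
      refine lintegral_congr fun x => ?_
      by_cases hx : x ∈ A
      · simp [hx, ENNReal.one_rpow]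
      · simp [hx, ENNReal.zero_rpow_of_pos hpq.pos]
    have hP0A : P0 A ≤ (m.choose k : ℝ≥0∞)⁻¹ := by
      rw [ENNReal.le_inv_iff_mul_le, mul_comm, hAtop]
      exact topSet_measure_le k hk
    -- factor 2
    have f2 : (∫⁻ x, (F x) ^ q ∂P0)
        = ENNReal.ofReal (rexp ((q*δ)^2/2 - q*δ^2/2)) ^ k := by
      have hFx : ∀ x, (F x) ^ q
          = ∏ i : Fin m, ENNReal.ofReal
              (rexp (if (i : ℕ) < k then (q*δ) * x i + (-(q*δ^2/2)) else 0)) := by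
        intro x
        simp only [hF]
        rw [← ENNReal.ofReal_prod_of_nonneg (fun i _ => (Real.exp_pos _).le),
          ← Real.exp_sum, ENNReal.ofReal_rpow_of_pos (Real.exp_pos _),
          Real.rpow_def_of_pos (Real.exp_pos _), Real.log_exp,
          ← ENNReal.ofReal_prod_of_nonneg (fun i _ => (Real.exp_pos _).le), ← Real.exp_sum,
          Finset.sum_mul]
        congr 2
        refine Finset.sum_congr rfl fun i _ => ?_
        by_cases h : (i : ℕ) < k
        · simp only [if_pos h]; ring
        · simp only [if_neg h]; ring
      simp_rw [hFx]
      rw [hP0]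
      rw [lintegral_pi_prod m (fun _ => gaussianReal 0 1) (fun _ => inferInstance)
        (fun i => fun y : ℝ =>
          ENNReal.ofReal (rexp (if (i : ℕ) < k then (q*δ) * y + (-(q*δ^2/2)) else 0))) (by
        intro i
        by_cases h : (i : ℕ) < k
        · simp only [if_pos h]; fun_prop
        · simp only [if_neg h]; fun_prop)]
      have hcoord : ∀ i : Fin m,
          (∫⁻ y, ENNReal.ofReal (rexp (if (i : ℕ) < k then (q*δ) * y + (-(q*δ^2/2)) else 0))
              ∂gaussianReal 0 1)
          = if (i : ℕ) < k then ENNReal.ofReal (rexp ((q*δ)^2/2 - q*δ^2/2)) else 1 := by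
        intro i
        by_cases h : (i : ℕ) < k
        · simp only [if_pos h]
          rw [lintegral_exp_gaussian_affine]
          ring_nf
        · simp only [if_neg h, Real.exp_zero, ENNReal.ofReal_one, lintegral_one,
            measure_univ]
      simp_rw [hcoord]
      rw [Finset.prod_ite, Finset.prod_const, Finset.prod_const, one_pow, mul_one]
      rw [show (Finset.univ.filter fun i : Fin m => (i : ℕ) < k).card = k from card_filter_lt hk]
    -- exponent computations
    have hp_pos : (0:ℝ) < 1/p := by
      rw [one_div]
      exact inv_pos.mpr hpq.pos
    have h1p : 1/p = (s - δ)/s := by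
      rw [hp_def, Real.conjExponent, hq_def]
      have hδ0 : δ ≠ 0 := hδ.ne'
      have hs0' : s ≠ 0 := hs_pos.ne'
      field_simp
    have hlog : Real.log B ≤ (k:ℝ)*(s^2/2) := by
      have h1 : B ≤ (m:ℝ)^k := by
        rw [hB_def]
        exact_mod_cast Nat.choose_le_pow m k
      have h2 : Real.log B ≤ Real.log ((m:ℝ)^k) := Real.log_le_log hB0 h1
      rw [Real.log_pow] at h2
      have : Real.log m = s^2/2 := by rw [hs2]; ring
      rw [this] at h2
      exact_mod_cast h2
    have hP0A' : (P0 A) ^ (1/p) ≤ ENNReal.ofReal (B⁻¹ ^ ((s - δ)/s)) := by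
      have hconv : ((m.choose k : ℝ≥0∞))⁻¹ = ENNReal.ofReal (B⁻¹) := by
        rw [ENNReal.ofReal_inv_of_pos hB0, hB_def, ENNReal.ofReal_natCast]
      calc (P0 A) ^ (1/p) ≤ (ENNReal.ofReal (B⁻¹)) ^ (1/p) := by
            rw [← hconv]
            exact ENNReal.rpow_le_rpow hP0A hp_pos.le
        _ = ENNReal.ofReal (B⁻¹ ^ ((s - δ)/s)) := by
            rw [ENNReal.ofReal_rpow_of_pos (inv_pos.mpr hB0), h1p]
    have hf2' : (ENNReal.ofReal (rexp ((q*δ)^2/2 - q*δ^2/2)) ^ k) ^ (1/q)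
        = ENNReal.ofReal (rexp ((k:ℝ)*δ*(s - δ)/2)) := by
      rw [← ENNReal.ofReal_pow (Real.exp_pos _).le, ← Real.exp_nat_mul,
        ENNReal.ofReal_rpow_of_pos (Real.exp_pos _), Real.rpow_def_of_pos (Real.exp_pos _),
        Real.log_exp]
      congr 1
      rw [hq_def]
      have hδ0 : δ ≠ 0 := hδ.ne'
      have hs0' : s ≠ 0 := hs_pos.ne'
      field_simp
    calc (Measure.pi fun i : Fin m => gaussianReal (if (i : ℕ) < k then δ else 0) 1) A
        = ∫⁻ x, (A.indicator (fun _ => (1:ℝ≥0∞)) * F) x ∂P0 := step1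
      _ ≤ (∫⁻ x, (A.indicator (fun _ => (1:ℝ≥0∞)) x) ^ p ∂P0) ^ (1/p)
          * (∫⁻ x, (F x) ^ q ∂P0) ^ (1/q) := step2
      _ = (P0 A) ^ (1/p) * (ENNReal.ofReal (rexp ((q*δ)^2/2 - q*δ^2/2)) ^ k) ^ (1/q) := by
          rw [f1, f2]
      _ ≤ ENNReal.ofReal (B⁻¹ ^ ((s - δ)/s)) * ENNReal.ofReal (rexp ((k:ℝ)*δ*(s - δ)/2)) := by
          rw [hf2']
          exact mul_le_mul_left hP0A' _
      _ = ENNReal.ofReal (B⁻¹ ^ ((s - δ)/s) * rexp ((k:ℝ)*δ*(s - δ)/2)) := by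
          rw [← ENNReal.ofReal_mul (by positivity)]
      _ ≤ ENNReal.ofReal (Real.exp (δ * k * s) / (m.choose k : ℝ)) := by
          refine ENNReal.ofReal_le_ofReal ?_
          exact final_real B s δ k hB1 hδ hcase hlog


end
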